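/- Suppose A is a finite menu and a ∈ A is such that a ≿ c(A) and a ∉ c(A) (i.e., A \ {a} excludes a). Let A̲ = c(A) ∪ {x ∈ A : c(A) ≻ x} be the set of items in A weakly worse than the chosen items. Then, assuming c satisfies IUA and Optimization, A̲ excludes a from below: a ≿ x for all x ∈ A̲ and a ∉ c(A̲ ∪ {a}). -/
import Mathlib


open Finset

/-- A total (weak) order: complete, transitive, antisymmetric. -/
def TotalOrderRel {α : Type*} (r : α → α → Prop) : Prop :=
  (∀ a b : α, r a b ∨ r b a) ∧ Transitive r ∧ ∀ a b : α, r a b → r b a → a = b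

/-- The set of `r`-maximal elements of a set `S`. -/
def argmaxOn {α : Type*} (r : α → α → Prop) (S : Set α) : Set α :=
  {x ∈ S | ∀ y ∈ S, r x y}

/-- The justifiable set `M(A)`: union over justifications of their maximizers on `A`. -/
def justSet {α : Type*} (M : Set (α → α → Prop)) (A : Finset α) : Set α :=
  ⋃ r ∈ M, argmaxOn r (A : Set α)

/-- A justifiability representation for `(pref, c)`. -/
def JustRep {α : Type*} (pref : α → α → Prop) (c : Finset α → Finset α)
    (M : Set (α → α → Prop)) : Prop :=
  M.Nonempty ∧ (∀ r ∈ M, TotalOrderRel r) ∧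
    ∀ A : Finset α, A.Nonempty → (c A : Set α) = argmaxOn pref (justSet M A)

/-- Irrelevance of Unjustifiable Alternatives. -/
def IUA {α : Type*} [DecidableEq α] (pref : α → α → Prop)
    (c : Finset α → Finset α) : Prop :=
  ∀ (A : Finset α) (a : α), a ∈ A → (∀ b ∈ c A, pref a b) → a ∉ c A →
    ∀ B : Finset α, A ⊆ B → c (B.erase a) = c B

/-- Optimization: all chosen elements are indifferent. -/
def Optimization {α : Type*} (pref : α → α → Prop) (c : Finset α → Finset α) : Prop :=
  ∀ A : Finset α, A.Nonempty → ∀ a ∈ c A, ∀ b ∈ c A, pref a b ∧ pref b a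

/-- `A` excludes `b` from below: `b ∉ c(A ∪ {b})` and `b ≿ a` for all `a ∈ A`. -/
def ExclBelow {α : Type*} [DecidableEq α] (pref : α → α → Prop)
    (c : Finset α → Finset α) (A : Finset α) (b : α) : Prop :=
  b ∉ c (insert b A) ∧ ∀ x ∈ A, pref b x

open scoped Classical

/-- if `A \ {a}` excludes `a`, then the set of items weakly worse than
the chosen items excludes `a` from below. -/
theorem exclBelow_of_excluded {α : Type*} [DecidableEq α] (pref : α → α → Prop)
    (c : Finset α → Finset α)
    (hcomp : ∀ a b : α, pref a b ∨ pref b a) (htrans : Transitive pref)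
    (hsub : ∀ A : Finset α, c A ⊆ A)
    (hne : ∀ A : Finset α, A.Nonempty → (c A).Nonempty)
    (hIUA : IUA pref c) (hOpt : Optimization pref c)
    (A : Finset α) (a : α) (haA : a ∈ A)
    (hbetter : ∀ b ∈ c A, pref a b) (hnotchosen : a ∉ c A) :
    ExclBelow pref c
      (c A ∪ A.filter fun x => ∀ b ∈ c A, pref b x ∧ ¬ pref x b) a := by
  classical
  set L := c A ∪ A.filter (fun x => ∀ b ∈ c A, pref b x ∧ ¬ pref x b) with hL
  have hAne : A.Nonempty := ⟨a, haA⟩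
  have hLsub : insert a L ⊆ A := by
    intro x hx
    rcases Finset.mem_insert.mp hx with h | h
    · exact h ▸ haA
    · rcases Finset.mem_union.mp h with h | h
      · exact hsub A h
      · exact Finset.mem_of_mem_filter x h
  -- key: any x ∈ A not in insert a L is weakly better than all of c A and not chosen
  have hkey : ∀ x ∈ A, x ∉ insert a L → (∀ b ∈ c A, pref x b) ∧ x ∉ c A := by
    intro x hxA hx
    have hxL : x ∉ L := fun h => hx (Finset.mem_insert_of_mem h)
    have hxc : x ∉ c A := fun h => hxL (Finset.mem_union_left _ h)
    have hxf : x ∉ A.filter (fun x => ∀ b ∈ c A, pref b x ∧ ¬ pref x b) :=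
      fun h => hxL (Finset.mem_union_right _ h)
    have : ¬ ∀ b ∈ c A, pref b x ∧ ¬ pref x b := by
      intro h; exact hxf (Finset.mem_filter.mpr ⟨hxA, h⟩)
    push_neg at this
    obtain ⟨b0, hb0, hb0'⟩ := this
    have hxb0 : pref x b0 := by
      by_cases h : pref b0 x
      · exact hb0' h
      · rcases hcomp x b0 with h' | h'
        · exact h'
        · exact absurd h' h
    refine ⟨fun b hb => htrans hxb0 ((hOpt A hAne b0 hb0 b hb).1), hxc⟩
  -- by induction: for all B between insert a L and A, c B = c A
  have main : ∀ k : ℕ, ∀ B : Finset α, insert a L ⊆ B → B ⊆ A → (A \ B).card = k →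
      c B = c A := by
    intro k
    induction k with
    | zero =>
      intro B hLB hBA hcard
      have : A \ B = ∅ := Finset.card_eq_zero.mp hcard
      have hAB : A ⊆ B := by
        intro x hx
        by_contra hxB
        have hmem : x ∈ A \ B := Finset.mem_sdiff.mpr ⟨hx, hxB⟩
        rw [this] at hmem
        exact absurd hmem (Finset.notMem_empty x)
      rw [Finset.Subset.antisymm hBA hAB]
    | succ n ih =>
      intro B hLB hBA hcard
      have hex : (A \ B).Nonempty := by
        rw [← Finset.card_pos, hcard]; omega
      obtain ⟨x, hx⟩ := hex
      rw [Finset.mem_sdiff] at hx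
      obtain ⟨hxA, hxB⟩ := hx
      set B' := insert x B with hB'
      have hLB' : insert a L ⊆ B' := hLB.trans (Finset.subset_insert x B)
      have hB'A : B' ⊆ A := Finset.insert_subset hxA hBA
      have hcard' : (A \ B').card = n := by
        have : A \ B' = (A \ B).erase x := by
          ext y
          simp only [Finset.mem_sdiff, Finset.mem_erase, hB', Finset.mem_insert]
          tauto
        rw [this, Finset.card_erase_of_mem (Finset.mem_sdiff.mpr ⟨hxA, hxB⟩), hcard]
        omega
      have hB'eq : c B' = c A := ih B' hLB' hB'A hcard'
      have hxnotin : x ∉ insert a L := fun h => hxB (hLB h)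
      obtain ⟨hxbetter, hxc⟩ := hkey x hxA hxnotin
      have hxB' : x ∈ B' := Finset.mem_insert_self x B
      have hxcB' : x ∉ c B' := by rw [hB'eq]; exact hxc
      have hxbetterB' : ∀ b ∈ c B', pref x b := by rw [hB'eq]; exact hxbetter
      have := hIUA B' x hxB' hxbetterB' hxcB' B' (Finset.Subset.refl _)
      rw [Finset.erase_insert hxB] at this
      rw [this, hB'eq]
  have hfinal : c (insert a L) = c A :=
    main (A \ insert a L).card (insert a L) (Finset.Subset.refl _) hLsub rfl
  constructor
  · rw [hfinal]; exact hnotchosen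
  · intro x hxL
    rcases Finset.mem_union.mp hxL with h | h
    · exact hbetter x h
    · obtain ⟨b0, hb0⟩ := hne A hAne
      exact htrans (hbetter b0 hb0) ((Finset.mem_filter.mp h).2 b0 hb0).1
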